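/- Let m be a positive integer, K ≥ 0, α > 0, and let γ > 0 satisfy m α γ < K + 1. Define O_{N,L}(β) = ∫₀^∞ f_R(x, K) (∫₀^{βx} f_G(y, m) dy) dx for β > 0 (the probability that a unit-mean Gamma variable with shape m is less than β times an independent unit-mean Rician variable with shape K). Then ∫₀^γ O_{N,L}(α t) dt = (e^{−K} (m α)^m γ^{m+1} / (Γ(m) (K+1)^m (m+1))) · Σ_{j=0}^∞ (K^j / j!) Σ_{k=0}^j (Γ(k+m)/k!) · ₂F₁(m+1, m+k; m+2; −m α γ / (K+1)), where ₂F₁(a, b; c; z) = Σ_{n=0}^∞ ((a)_n (b)_n / (c)_n) z^n / n! is the Gauss hypergeometric series (convergent since |−mαγ/(K+1)| < 1) and (q)_n denotes the Pochhammer symbol. -/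

import Mathlib

open Real MeasureTheory intervalIntegral

/-- Modified Bessel function of the first kind of order zero. -/
noncomputable def besselI0 (z : ℝ) : ℝ :=
  ∑' k : ℕ, (z / 2) ^ (2 * k) / ((Nat.factorial k : ℝ)) ^ 2

/-- Unit-mean Nakagami-m (Gamma) density with shape parameter `s`. -/
noncomputable def fG (s x : ℝ) : ℝ :=
  if 0 < x then s ^ s * x ^ (s - 1) * Real.exp (-s * x) / Real.Gamma s else 0

/-- Unit-mean Rician density with shape factor `K`. -/
noncomputable def fR (K y : ℝ) : ℝ :=
  if 0 < y then
    (K + 1) * Real.exp (-K - (K + 1) * y) * besselI0 (Real.sqrt (4 * K * (K + 1) * y))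
  else 0

/-- Outage probability `O_{N,L}(β)`: probability that a unit-mean Gamma variable of shape `m`
is less than `β` times an independent unit-mean Rician variable of shape `K`. -/
noncomputable def O_NL (m : ℕ) (K : ℝ) (β : ℝ) : ℝ :=
  ∫ x in Set.Ioi (0 : ℝ), fR K x * ∫ y in Set.Ioo 0 (β * x), fG (m : ℝ) y

/-- The Gauss hypergeometric series `₂F₁(a, b; c; z)` (with Pochhammer symbols). -/
noncomputable def hyp2F1 (a b c z : ℝ) : ℝ :=
  ∑' n : ℕ,
    ((ascPochhammer ℝ n).eval a * (ascPochhammer ℝ n).eval b /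
        (ascPochhammer ℝ n).eval c) * z ^ n / (Nat.factorial n : ℝ)



/-- Pochhammer positivity -/
lemma poch_pos {a : ℝ} (ha : 0 < a) (n : ℕ) : 0 < (ascPochhammer ℝ n).eval a := by
  induction n with
  | zero => simp
  | succ n ih => rw [ascPochhammer_succ_eval]; positivity

lemma poch_succ_left_eval (a : ℝ) (n : ℕ) :
    (ascPochhammer ℝ (n + 1)).eval a = a * (ascPochhammer ℝ n).eval (a + 1) := by
  rw [ascPochhammer_succ_left, Polynomial.eval_mul, Polynomial.eval_X,
    Polynomial.eval_comp, Polynomial.eval_add, Polynomial.eval_X, Polynomial.eval_one]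

/-- Σ_{i≤n} (b)_i / i! = (b+1)_n / n! -/
lemma poch_sum_identity (b : ℝ) (n : ℕ) :
    ∑ i ∈ Finset.range (n + 1), (ascPochhammer ℝ i).eval b / (Nat.factorial i : ℝ)
      = (ascPochhammer ℝ n).eval (b + 1) / (Nat.factorial n : ℝ) := by
  induction n with
  | zero => simp
  | succ n ih =>
    rw [Finset.sum_range_succ, ih, poch_succ_left_eval,
      ascPochhammer_succ_eval n (b + 1), Nat.factorial_succ]
    have h1 : (0:ℝ) < (n:ℝ) + 1 := by positivity
    have h2 : (0:ℝ) < (Nat.factorial n : ℝ) := by positivity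
    push_cast
    field_simp
    ring

lemma poch_nonneg {a : ℝ} (ha : 0 ≤ a) (n : ℕ) : 0 ≤ (ascPochhammer ℝ n).eval a := by
  induction n with
  | zero => simp
  | succ n ih => rw [ascPochhammer_succ_eval]; positivity

/-- Negative binomial series: `Σ (b)_n x^n / n! = (1-x)^{-b}` for `|x| < 1`. -/
lemma negBinom_hasSum (b : ℕ) : ∀ {x : ℝ}, |x| < 1 →
    HasSum (fun n : ℕ => (ascPochhammer ℝ n).eval (b : ℝ) * x ^ n / (Nat.factorial n : ℝ))
      (((1 - x)⁻¹) ^ b) := by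
  induction b with
  | zero =>
    intro x hx
    have : (fun n : ℕ => (ascPochhammer ℝ n).eval ((0 : ℕ) : ℝ) * x ^ n / (Nat.factorial n : ℝ))
        = fun n => if n = 0 then (1 : ℝ) else 0 := by
      funext n
      cases n with
      | zero => simp
      | succ n => simp [Nat.cast_zero, ascPochhammer_eval_zero]
    rw [this, pow_zero]
    exact hasSum_ite_eq 0 1
  | succ b ih =>
    intro x hx
    set f : ℕ → ℝ := fun n => (ascPochhammer ℝ n).eval (b : ℝ) * x ^ n / (Nat.factorial n : ℝ)
    set g : ℕ → ℝ := fun n => x ^ n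
    have hfabs : HasSum (fun n : ℕ =>
        (ascPochhammer ℝ n).eval (b : ℝ) * |x| ^ n / (Nat.factorial n : ℝ))
        (((1 - |x|)⁻¹) ^ b) := ih (by rwa [abs_abs])
    have hfn : Summable fun n => ‖f n‖ := by
      refine hfabs.summable.congr fun n => ?_
      simp only [f, norm_div, norm_mul, Real.norm_eq_abs, abs_pow]
      rw [abs_of_nonneg (poch_nonneg (by positivity) n), Nat.abs_cast]
    have hgn : Summable fun n => ‖g n‖ := by
      simpa [g, abs_pow] using summable_geometric_of_abs_lt_one hx
    have key := tsum_mul_tsum_eq_tsum_sum_antidiagonal_of_summable_norm hfn hgn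
    have hf : HasSum f (((1 - x)⁻¹) ^ b) := ih hx
    have hg : HasSum g ((1 - x)⁻¹) := hasSum_geometric_of_abs_lt_one hx
    rw [hf.tsum_eq, hg.tsum_eq] at key
    have hsum : Summable fun n => ∑ kl ∈ Finset.HasAntidiagonal.antidiagonal n, f kl.1 * g kl.2 :=
      summable_sum_mul_antidiagonal_of_summable_norm' hfn hf.summable hgn hg.summable
    have hterm : ∀ n : ℕ, (∑ kl ∈ Finset.HasAntidiagonal.antidiagonal n, f kl.1 * g kl.2)
        = (ascPochhammer ℝ n).eval ((b : ℝ) + 1) * x ^ n / (Nat.factorial n : ℝ) := by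
      intro n
      rw [Finset.Nat.sum_antidiagonal_eq_sum_range_succ_mk]
      have : ∀ k ∈ Finset.range (n + 1), f k * g (n - k)
          = ((ascPochhammer ℝ k).eval (b : ℝ) / (Nat.factorial k : ℝ)) * x ^ n := by
        intro k hk
        have hkn : k ≤ n := Nat.lt_succ_iff.mp (Finset.mem_range.mp hk)
        simp only [f, g]
        rw [div_mul_eq_mul_div, div_mul_eq_mul_div, mul_assoc, ← pow_add,
          Nat.add_sub_cancel' hkn]
      rw [Finset.sum_congr rfl this, ← Finset.sum_mul, poch_sum_identity]
      ring
    have : HasSum (fun n => ∑ kl ∈ Finset.HasAntidiagonal.antidiagonal n, f kl.1 * g kl.2)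
        (((1 - x)⁻¹) ^ (b + 1)) := by
      rw [hsum.hasSum_iff, ← key, pow_succ]
    have hcast : ((b + 1 : ℕ) : ℝ) = (b : ℝ) + 1 := by push_cast; ring
    have heq : (fun n : ℕ => (ascPochhammer ℝ n).eval ((b + 1 : ℕ) : ℝ) * x ^ n
        / (Nat.factorial n : ℝ)) = fun n => ∑ kl ∈ Finset.HasAntidiagonal.antidiagonal n, f kl.1 * g kl.2 :=
      funext fun n => by rw [hterm n, hcast]
    rw [heq]
    exact this

lemma integrableOn_pow_exp (n : ℕ) {r : ℝ} (hr : 0 < r) :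
    IntegrableOn (fun x : ℝ => x ^ n * Real.exp (-(r * x))) (Set.Ioi 0) := by
  have h := integrableOn_rpow_mul_exp_neg_mul_rpow (s := (n : ℝ)) (p := 1) (b := r)
    (lt_of_lt_of_le neg_one_lt_zero (Nat.cast_nonneg n)) one_pos hr
  simpa only [Real.rpow_one, Real.rpow_natCast, neg_mul] using h

lemma integral_pow_exp (n : ℕ) {r : ℝ} (hr : 0 < r) :
    ∫ x in Set.Ioi (0:ℝ), x ^ n * Real.exp (-(r * x))
      = (Nat.factorial n : ℝ) / r ^ (n + 1) := by
  have h := Real.integral_rpow_mul_exp_neg_mul_Ioi (a := (n : ℝ) + 1) (r := r)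
    (by positivity) hr
  have h2 : ∀ t ∈ Set.Ioi (0:ℝ), t ^ ((n : ℝ) + 1 - 1) * Real.exp (-(r * t))
      = t ^ n * Real.exp (-(r * t)) := by
    intro t _
    rw [add_sub_cancel_right, Real.rpow_natCast]
  rw [setIntegral_congr_fun measurableSet_Ioi h2] at h
  rw [h]
  rw [Real.Gamma_nat_eq_factorial]
  have h3 : ((n : ℝ) + 1) = ((n + 1 : ℕ) : ℝ) := by push_cast; ring
  rw [h3, Real.rpow_natCast, div_pow, one_pow]
  ring

lemma integral_pow_exp_Ioi (n : ℕ) {r a : ℝ} (hr : 0 < r) (ha : 0 ≤ a) :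
    ∫ x in Set.Ioi a, x ^ n * Real.exp (-(r * x))
      = Real.exp (-(r * a)) * ∑ k ∈ Finset.range (n + 1),
          ((Nat.factorial n : ℝ) / (Nat.factorial k : ℝ)) * a ^ k / r ^ (n - k + 1) := by
  set c : ℕ → ℝ := fun k => ((Nat.factorial n : ℝ) / (Nat.factorial k : ℝ)) / r ^ (n - k + 1)
    with hc
  set S : ℝ → ℝ := fun x => ∑ k ∈ Finset.range (n + 1), c k * x ^ k with hS
  set F : ℝ → ℝ := fun x => -(Real.exp (-(r * x)) * S x) with hF
  have hSd : ∀ x : ℝ, HasDerivAt S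
      (∑ k ∈ Finset.range (n + 1), c k * ((k : ℝ) * x ^ (k - 1))) x := by
    intro x
    exact HasDerivAt.fun_sum fun k _ => (hasDerivAt_pow k x).const_mul (c k)
  have key : ∀ x : ℝ, r * S x - (∑ k ∈ Finset.range (n + 1), c k * ((k : ℝ) * x ^ (k - 1)))
      = x ^ n := by
    intro x
    have h1 : r * S x = (∑ k ∈ Finset.range n,
        ((Nat.factorial n : ℝ) / (Nat.factorial k : ℝ)) / r ^ (n - k) * x ^ k) + x ^ n := by
      rw [hS]
      simp only [Finset.mul_sum]
      rw [Finset.sum_range_succ]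
      congr 1
      · refine Finset.sum_congr rfl fun k hk => ?_
        have hkn : k < n := Finset.mem_range.mp hk
        have : n - k + 1 = (n - k - 1) + 2 := by omega
        have h2 : n - k = (n - k - 1) + 1 := by omega
        rw [hc]
        simp only
        rw [this, h2, pow_succ, pow_succ]
        field_simp
        rw [Nat.add_sub_cancel]; ring
      · rw [hc]
        have hfn : ((Nat.factorial n : ℝ)) ≠ 0 := by positivity
        simp only [Nat.sub_self, pow_zero, pow_one]
        field_simp; ring
    have h2 : (∑ k ∈ Finset.range (n + 1), c k * ((k : ℝ) * x ^ (k - 1)))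
        = ∑ k ∈ Finset.range n,
          ((Nat.factorial n : ℝ) / (Nat.factorial k : ℝ)) / r ^ (n - k) * x ^ k := by
      rw [Finset.sum_range_succ']
      have h0 : c 0 * ((0 : ℕ) * x ^ (0 - 1)) = 0 := by simp
      rw [h0, add_zero]
      refine Finset.sum_congr rfl fun k hk => ?_
      have hkn : k < n := Finset.mem_range.mp hk
      have h3 : n - (k + 1) + 1 = n - k := by omega
      rw [hc]
      simp only [Nat.add_sub_cancel]
      rw [h3, Nat.factorial_succ]
      have hk1 : ((k + 1 : ℕ) : ℝ) ≠ 0 := by positivity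
      push_cast
      field_simp

    rw [h1, h2]; ring
  have hFd : ∀ x : ℝ, HasDerivAt F (x ^ n * Real.exp (-(r * x))) x := by
    intro x
    have hE : HasDerivAt (fun x : ℝ => Real.exp (-(r * x)))
        (Real.exp (-(r * x)) * (-r)) x := by
      have : HasDerivAt (fun x : ℝ => -(r * x)) (-r) x := by
        simpa using ((hasDerivAt_id x).const_mul r).fun_neg
      exact this.exp
    have := (hE.fun_mul (hSd x)).fun_neg
    refine this.congr_deriv ?_
    have hk := key x
    rw [← hk]; ring
  have htend : Filter.Tendsto F Filter.atTop (nhds 0) := by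
    rw [show (0:ℝ) = -0 by ring]
    refine Filter.Tendsto.neg ?_
    have : ∀ x : ℝ, Real.exp (-(r * x)) * S x
        = ∑ k ∈ Finset.range (n + 1), c k * (x ^ k * Real.exp (-(r * x))) := by
      intro x; rw [hS, Finset.mul_sum]; refine Finset.sum_congr rfl fun k _ => ?_; ring
    simp only [this]
    rw [show (0:ℝ) = ∑ k ∈ Finset.range (n + 1), c k * 0 by simp]
    refine tendsto_finset_sum _ fun k _ => Filter.Tendsto.const_mul _ ?_
    have := tendsto_rpow_mul_exp_neg_mul_atTop_nhds_zero (k : ℝ) r hr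
    simpa only [Real.rpow_natCast, neg_mul] using this
  have hint : IntegrableOn (fun x : ℝ => x ^ n * Real.exp (-(r * x))) (Set.Ioi a) :=
    (integrableOn_pow_exp n hr).mono_set (Set.Ioi_subset_Ioi ha)
  have := integral_Ioi_of_hasDerivAt_of_tendsto' (fun x _ => hFd x) hint htend
  rw [this, hF]
  simp only [zero_sub, neg_neg, hS, Finset.mul_sum]
  refine Finset.sum_congr rfl fun k _ => ?_
  rw [hc]; ring

lemma euler_2F1 (m b : ℕ) {cc γ : ℝ} (hc : 0 < cc) (hγ : 0 < γ) (h1 : cc * γ < 1) :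
    ∫ t in Set.Ioc (0:ℝ) γ, t ^ m * ((1 + cc * t)⁻¹) ^ b
      = γ ^ (m + 1) / ((m : ℝ) + 1)
        * hyp2F1 ((m : ℝ) + 1) (b : ℝ) ((m : ℝ) + 2) (-(cc * γ)) := by
  set F : ℕ → ℝ → ℝ := fun n t =>
    ((ascPochhammer ℝ n).eval (b : ℝ) * (-cc) ^ n / (Nat.factorial n : ℝ)) * t ^ (m + n)
    with hFdef
  have habs : ∀ t ∈ Set.Ioc (0:ℝ) γ, |(-(cc * t))| < 1 := by
    intro t ht
    rw [abs_neg, abs_of_nonneg (mul_nonneg hc.le ht.1.le)]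
    calc cc * t ≤ cc * γ := by nlinarith [ht.2, hc]
    _ < 1 := h1
  have hstep1 : ∀ t ∈ Set.Ioc (0:ℝ) γ, t ^ m * ((1 + cc * t)⁻¹) ^ b = ∑' n, F n t := by
    intro t ht
    have hs := (negBinom_hasSum b (habs t ht)).mul_left ((t:ℝ) ^ m)
    have heq : (1 - -(cc * t))⁻¹ ^ b = ((1 + cc * t)⁻¹) ^ b := by norm_num
    rw [heq] at hs
    rw [← hs.tsum_eq]
    refine tsum_congr fun n => ?_
    rw [hFdef]
    simp only
    rw [neg_pow, mul_pow, pow_add]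
    ring
  rw [setIntegral_congr_fun measurableSet_Ioc hstep1]
  have hpow_int : ∀ p : ℕ, ∫ t in Set.Ioc (0:ℝ) γ, t ^ p = γ ^ (p + 1) / ((p : ℝ) + 1) := by
    intro p
    rw [← intervalIntegral.integral_of_le hγ.le, integral_pow]
    simp
  have hF_int : ∀ n : ℕ, Integrable (F n) (volume.restrict (Set.Ioc 0 γ)) := by
    intro n
    refine Integrable.const_mul ?_ _
    exact (intervalIntegral.intervalIntegrable_pow (m + n)).1
  have hnorm : ∀ n : ℕ, ∫ t in Set.Ioc (0:ℝ) γ, ‖F n t‖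
      = ((ascPochhammer ℝ n).eval (b : ℝ) * cc ^ n / (Nat.factorial n : ℝ))
        * (γ ^ (m + n + 1) / ((m + n : ℝ) + 1)) := by
    intro n
    have : ∀ t ∈ Set.Ioc (0:ℝ) γ, ‖F n t‖
        = ((ascPochhammer ℝ n).eval (b : ℝ) * cc ^ n / (Nat.factorial n : ℝ)) * t ^ (m + n) := by
      intro t ht
      rw [hFdef]
      simp only [norm_mul, norm_div, Real.norm_eq_abs, abs_pow, abs_neg]
      rw [abs_of_nonneg (poch_nonneg (Nat.cast_nonneg b) n), Nat.abs_cast,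
        abs_of_nonneg hc.le, abs_of_nonneg ht.1.le]
    rw [setIntegral_congr_fun measurableSet_Ioc this, MeasureTheory.integral_const_mul, hpow_int (m + n)]
    push_cast
    ring_nf
  have hF_sum : Summable fun n => ∫ t in Set.Ioc (0:ℝ) γ, ‖F n t‖ := by
    have hb : Summable (fun n : ℕ =>
        (ascPochhammer ℝ n).eval (b : ℝ) * (cc * γ) ^ n / (Nat.factorial n : ℝ)) := by
      refine (negBinom_hasSum b ?_).summable
      rw [abs_of_nonneg (by positivity)]
      exact h1
    refine Summable.of_nonneg_of_le (fun n => ?_) (fun n => ?_)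
      (hb.mul_right (γ ^ (m + 1)))
    · rw [hnorm n]
      have := poch_nonneg (Nat.cast_nonneg b) n
      positivity
    · rw [hnorm n]
      have hp := poch_nonneg (Nat.cast_nonneg b) n
      have h2 : γ ^ (m + n + 1) / ((m + n : ℝ) + 1) ≤ γ ^ n * γ ^ (m + 1) := by
        rw [div_le_iff₀ (by positivity)]
        calc γ ^ (m + n + 1) = γ ^ n * γ ^ (m + 1) * 1 := by rw [← pow_add]; ring_nf
        _ ≤ γ ^ n * γ ^ (m + 1) * ((m + n : ℝ) + 1) := by
            have hle : (1:ℝ) ≤ (m + n : ℝ) + 1 := by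
              have : (0:ℝ) ≤ (m:ℝ) + (n:ℝ) := by positivity
              push_cast
              linarith
            exact mul_le_mul_of_nonneg_left hle (by positivity)
      calc (ascPochhammer ℝ n).eval (b : ℝ) * cc ^ n / (Nat.factorial n : ℝ)
            * (γ ^ (m + n + 1) / ((m + n : ℝ) + 1))
          ≤ (ascPochhammer ℝ n).eval (b : ℝ) * cc ^ n / (Nat.factorial n : ℝ)
            * (γ ^ n * γ ^ (m + 1)) := by
            refine mul_le_mul_of_nonneg_left h2 ?_
            positivity
      _ = (ascPochhammer ℝ n).eval (b : ℝ) * (cc * γ) ^ n / (Nat.factorial n : ℝ)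
            * γ ^ (m + 1) := by rw [mul_pow]; ring
  rw [← MeasureTheory.integral_tsum_of_summable_integral_norm hF_int hF_sum]
  rw [hyp2F1, ← tsum_mul_left]
  refine tsum_congr fun n => ?_
  have hint : ∫ t in Set.Ioc (0:ℝ) γ, F n t
      = ((ascPochhammer ℝ n).eval (b : ℝ) * (-cc) ^ n / (Nat.factorial n : ℝ))
        * (γ ^ (m + n + 1) / ((m + n : ℝ) + 1)) := by
    rw [hFdef]
    simp only
    rw [MeasureTheory.integral_const_mul, hpow_int (m + n)]
    push_cast
    ring_nf
  rw [hint]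
  have hrel : (ascPochhammer ℝ n).eval ((m : ℝ) + 1) * ((m : ℝ) + 1 + n)
      = ((m : ℝ) + 1) * (ascPochhammer ℝ n).eval ((m : ℝ) + 2) := by
    have h1 := ascPochhammer_succ_eval n ((m : ℝ) + 1)
    have h2 := poch_succ_left_eval ((m : ℝ) + 1) n
    rw [show (m : ℝ) + 1 + 1 = (m : ℝ) + 2 by ring] at h2
    rw [← h1, h2]
  have hP2 : (0:ℝ) < (ascPochhammer ℝ n).eval ((m : ℝ) + 2) := poch_pos (by positivity) n
  have hM1 : (0:ℝ) < (m : ℝ) + 1 := by positivity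
  have hMn : (0:ℝ) < (m : ℝ) + n + 1 := by positivity
  have hfac : (0:ℝ) < (Nat.factorial n : ℝ) := by positivity
  have hz : (-(cc * γ)) ^ n = (-cc) ^ n * γ ^ n := by rw [show -(cc*γ) = -cc * γ by ring, mul_pow]
  have hγp : γ ^ (m + n + 1) = γ ^ (m + 1) * γ ^ n := by rw [← pow_add]; ring_nf
  rw [hz, hγp]
  have hfrac : (ascPochhammer ℝ n).eval ((m:ℝ)+1) / (ascPochhammer ℝ n).eval ((m:ℝ)+2)
      = ((m:ℝ)+1)/((m:ℝ)+(n:ℝ)+1) := by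
    rw [div_eq_div_iff hP2.ne' hMn.ne']
    linear_combination hrel
  have hre : (ascPochhammer ℝ n).eval ((m:ℝ)+1) * (ascPochhammer ℝ n).eval ((b:ℝ))
      / (ascPochhammer ℝ n).eval ((m:ℝ)+2)
      = (ascPochhammer ℝ n).eval ((b:ℝ)) * (((m:ℝ)+1)/((m:ℝ)+(n:ℝ)+1)) := by
    rw [← hfrac]; ring
  rw [hre]
  field_simp


lemma W_nonneg (p : ℕ) (c u : ℝ) :
    0 ≤ ∫ y in Set.Ioo (0:ℝ) u, y ^ p * Real.exp (-(c * y)) :=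
  setIntegral_nonneg measurableSet_Ioo fun y hy => by
    have := hy.1.le; positivity

lemma W_le (p : ℕ) {c : ℝ} (hc : 0 < c) (u : ℝ) :
    ∫ y in Set.Ioo (0:ℝ) u, y ^ p * Real.exp (-(c * y))
      ≤ (Nat.factorial p : ℝ) / c ^ (p + 1) := by
  rw [← integral_pow_exp p hc]
  refine setIntegral_mono_set (integrableOn_pow_exp p hc) ?_ ?_
  · filter_upwards [ae_restrict_mem measurableSet_Ioi] with y (hy : (0:ℝ) < y)
    positivity
  · exact Filter.Eventually.of_forall fun y (hy : y ∈ Set.Ioo (0:ℝ) u) => hy.1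

lemma double_swap (j p : ℕ) {r c β : ℝ} (hr : 0 < r) (hc : 0 < c) (hβ : 0 < β) :
    ∫ x in Set.Ioi (0:ℝ), x ^ j * Real.exp (-(r * x))
        * ∫ y in Set.Ioo 0 (β * x), y ^ p * Real.exp (-(c * y))
      = ∫ y in Set.Ioi (0:ℝ), (y ^ p * Real.exp (-(c * y)))
        * ∫ x in Set.Ioi (y / β), x ^ j * Real.exp (-(r * x)) := by
  set f : ℝ → ℝ := fun x => x ^ j * Real.exp (-(r * x)) with hf
  set g : ℝ → ℝ := fun y => y ^ p * Real.exp (-(c * y)) with hg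
  set s : Set (ℝ × ℝ) := {q : ℝ × ℝ | 0 < q.1 ∧ 0 < q.2 ∧ q.2 < β * q.1} with hs
  have hsm : MeasurableSet s := by
    apply MeasurableSet.inter (measurableSet_lt measurable_const measurable_fst)
    exact MeasurableSet.inter (measurableSet_lt measurable_const measurable_snd)
      (measurableSet_lt measurable_snd (measurable_fst.const_mul β))
  set Φ : ℝ × ℝ → ℝ := Set.indicator s (fun q => f q.1 * g q.2) with hΦ
  have hfcont : Continuous f := by fun_prop
  have hgcont : Continuous g := by fun_prop
  have hΦmeas : AEStronglyMeasurable Φ (volume.prod volume) :=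
    (((hfcont.comp continuous_fst).mul (hgcont.comp continuous_snd)).aestronglyMeasurable).indicator hsm
  have hfInt : Integrable ((Set.Ioi (0:ℝ)).indicator f) volume :=
    (integrable_indicator_iff measurableSet_Ioi).2 (integrableOn_pow_exp j hr)
  have hgInt : Integrable ((Set.Ioi (0:ℝ)).indicator g) volume :=
    (integrable_indicator_iff measurableSet_Ioi).2 (integrableOn_pow_exp p hc)
  have hΨInt : Integrable (fun q : ℝ × ℝ =>
      (Set.Ioi (0:ℝ)).indicator f q.1 * (Set.Ioi (0:ℝ)).indicator g q.2)
      (volume.prod volume) := hfInt.mul_prod hgInt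
  have hΦInt : Integrable Φ (volume.prod volume) := by
    refine hΨInt.mono' hΦmeas (Filter.Eventually.of_forall fun q => ?_)
    rw [hΦ]
    by_cases hq : q ∈ s
    · rw [Set.indicator_of_mem hq]
      obtain ⟨h1, h2, _⟩ := hq
      rw [Real.norm_eq_abs, abs_of_nonneg (by positivity :
        (0:ℝ) ≤ f q.1 * g q.2)]
      rw [Set.indicator_of_mem (Set.mem_Ioi.mpr h1), Set.indicator_of_mem (Set.mem_Ioi.mpr h2)]
    · rw [Set.indicator_of_notMem hq, norm_zero]
      have h1 : ∀ x : ℝ, 0 ≤ (Set.Ioi (0:ℝ)).indicator f x := fun x =>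
        Set.indicator_nonneg (fun x hx => by
          have : (0:ℝ) < x := hx
          positivity) x
      have h2 : ∀ y : ℝ, 0 ≤ (Set.Ioi (0:ℝ)).indicator g y := fun y =>
        Set.indicator_nonneg (fun y hy => by
          have : (0:ℝ) < y := hy
          positivity) y
      exact mul_nonneg (h1 q.1) (h2 q.2)
  -- LHS = iterated integral of Φ
  have hL : (∫ x in Set.Ioi (0:ℝ), f x * ∫ y in Set.Ioo 0 (β * x), g y)
      = ∫ x : ℝ, ∫ y : ℝ, Φ (x, y) := by
    rw [← MeasureTheory.integral_indicator measurableSet_Ioi]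
    congr 1
    funext x
    by_cases hx : (0:ℝ) < x
    · rw [Set.indicator_of_mem (Set.mem_Ioi.mpr hx)]
      rw [← MeasureTheory.integral_indicator measurableSet_Ioo]
      rw [← MeasureTheory.integral_const_mul]
      congr 1
      funext y
      rw [hΦ, Set.indicator_apply, Set.indicator_apply]
      have : (x, y) ∈ s ↔ y ∈ Set.Ioo 0 (β * x) := by
        simp only [hs, Set.mem_setOf_eq, Set.mem_Ioo]
        constructor
        · rintro ⟨_, h2, h3⟩; exact ⟨h2, h3⟩
        · rintro ⟨h2, h3⟩; exact ⟨hx, h2, h3⟩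
      rw [if_congr this rfl rfl]
      split_ifs with h
      · ring
      · ring
    · rw [Set.indicator_of_notMem (by simpa using hx)]
      have : ∀ y : ℝ, Φ (x, y) = 0 := by
        intro y
        rw [hΦ, Set.indicator_of_notMem]
        rintro ⟨h1, _, _⟩
        exact hx h1
      simp [this]
  -- RHS = swapped iterated integral of Φ
  have hR : (∫ y in Set.Ioi (0:ℝ), g y * ∫ x in Set.Ioi (y / β), f x)
      = ∫ y : ℝ, ∫ x : ℝ, Φ (x, y) := by
    rw [← MeasureTheory.integral_indicator measurableSet_Ioi]
    congr 1
    funext y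
    by_cases hy : (0:ℝ) < y
    · rw [Set.indicator_of_mem (Set.mem_Ioi.mpr hy)]
      rw [← MeasureTheory.integral_indicator measurableSet_Ioi, ← MeasureTheory.integral_const_mul]
      congr 1
      funext x
      rw [hΦ, Set.indicator_apply, Set.indicator_apply]
      have : (x, y) ∈ s ↔ x ∈ Set.Ioi (y / β) := by
        simp only [hs, Set.mem_setOf_eq, Set.mem_Ioi]
        constructor
        · rintro ⟨_, _, h3⟩
          exact (div_lt_iff₀ hβ).mpr (by linarith [h3])
        · intro h
          have hyx : y < β * x := by
            have := (div_lt_iff₀ hβ).mp h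
            linarith
          have hx : 0 < x := lt_trans (by positivity) h
          exact ⟨hx, hy, hyx⟩
      rw [if_congr this rfl rfl]
      split_ifs with h
      · ring
      · ring
    · rw [Set.indicator_of_notMem (by simpa using hy)]
      have : ∀ x : ℝ, Φ (x, y) = 0 := by
        intro x
        rw [hΦ, Set.indicator_of_notMem]
        rintro ⟨_, h2, _⟩
        exact hy h2
      simp [this]
  rw [hL, hR]
  exact integral_integral_swap hΦInt

lemma D_value (j p : ℕ) {r c β : ℝ} (hr : 0 < r) (hc : 0 < c) (hβ : 0 < β) :
    ∫ x in Set.Ioi (0:ℝ), x ^ j * Real.exp (-(r * x))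
        * ∫ y in Set.Ioo 0 (β * x), y ^ p * Real.exp (-(c * y))
      = ∑ k ∈ Finset.range (j + 1),
          ((Nat.factorial j : ℝ) / (Nat.factorial k : ℝ)) * (Nat.factorial (p + k) : ℝ)
            * β ^ (p + 1) / (r ^ (j - k + 1) * (c * β + r) ^ (p + k + 1)) := by
  have hcrβ : (0:ℝ) < c + r / β := by positivity
  rw [double_swap j p hr hc hβ]
  have hstep : ∀ y ∈ Set.Ioi (0:ℝ),
      (y ^ p * Real.exp (-(c * y))) * ∫ x in Set.Ioi (y / β), x ^ j * Real.exp (-(r * x))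
      = ∑ k ∈ Finset.range (j + 1),
          ((Nat.factorial j : ℝ) / (Nat.factorial k : ℝ) / (β ^ k * r ^ (j - k + 1)))
            * (y ^ (p + k) * Real.exp (-((c + r / β) * y))) := by
    intro y hy
    have hy0 : (0:ℝ) < y := hy
    rw [integral_pow_exp_Ioi j hr (div_pos hy0 hβ).le]
    rw [Finset.mul_sum, Finset.mul_sum]
    refine Finset.sum_congr rfl fun k hk => ?_
    have hexp : Real.exp (-(c * y)) * Real.exp (-(r * (y / β)))
        = Real.exp (-((c + r / β) * y)) := by
      rw [← Real.exp_add]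
      congr 1
      field_simp
      ring
    have hdp : (y / β) ^ k = y ^ k / β ^ k := div_pow y β k
    rw [hdp]
    rw [pow_add]
    rw [← hexp]
    field_simp
    ring
  rw [setIntegral_congr_fun measurableSet_Ioi hstep]
  rw [integral_finset_sum _ (fun k _ => ((integrableOn_pow_exp (p + k) hcrβ).const_mul _))]
  refine Finset.sum_congr rfl fun k hk => ?_
  rw [MeasureTheory.integral_const_mul, integral_pow_exp (p + k) hcrβ]
  have hcb : c + r / β = (c * β + r) / β := by field_simp
  rw [hcb, div_pow]
  have h1 : (0:ℝ) < c * β + r := by positivity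
  field_simp
  ring

lemma besselI0_sqrt {u : ℝ} (hu : 0 ≤ u) :
    besselI0 (Real.sqrt (4 * u)) = ∑' k : ℕ, u ^ k / ((Nat.factorial k : ℝ)) ^ 2 := by
  rw [besselI0]
  refine tsum_congr fun k => ?_
  congr 1
  rw [pow_mul]
  congr 1
  rw [div_pow, Real.sq_sqrt (by linarith)]
  norm_num

lemma fG_eq (m : ℕ) (hm : 0 < m) {y : ℝ} (hy : 0 < y) :
    fG (m : ℝ) y = (m : ℝ) ^ (m : ℕ) / Real.Gamma m
      * (y ^ (m - 1) * Real.exp (-((m : ℝ) * y))) := by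
  rw [fG, if_pos hy]
  have h1 : (m : ℝ) ^ (m : ℝ) = (m : ℝ) ^ (m : ℕ) := Real.rpow_natCast _ m
  have h2 : y ^ ((m : ℝ) - 1) = y ^ (m - 1 : ℕ) := by
    rw [show (m : ℝ) - 1 = ((m - 1 : ℕ) : ℝ) by
      have : (1:ℕ) ≤ m := hm
      push_cast [this]
      ring]
    exact Real.rpow_natCast _ _
  rw [h1, h2, neg_mul]
  ring

lemma O_NL_eq (m : ℕ) (hm : 0 < m) {K β : ℝ} (hK : 0 ≤ K) (hβ : 0 < β) :
    O_NL m K β = ∑' j : ℕ,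
      ((K + 1) * Real.exp (-K) * ((m : ℝ) ^ (m : ℕ) / Real.Gamma m)
          * (K * (K + 1)) ^ j / ((Nat.factorial j : ℝ)) ^ 2)
        * ∑ k ∈ Finset.range (j + 1),
            ((Nat.factorial j : ℝ) / (Nat.factorial k : ℝ)) * (Nat.factorial (m - 1 + k) : ℝ)
              * β ^ ((m - 1) + 1)
              / ((K + 1) ^ (j - k + 1) * ((m : ℝ) * β + (K + 1)) ^ ((m - 1) + k + 1)) := by
  have hr : (0:ℝ) < K + 1 := by linarith
  set p : ℕ := m - 1 with hp
  set g : ℝ → ℝ := fun y => y ^ p * Real.exp (-((m : ℝ) * y)) with hg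
  set W : ℝ → ℝ := fun u => ∫ y in Set.Ioo (0:ℝ) u, g y with hW
  set C0 : ℝ := (K + 1) * Real.exp (-K) * ((m : ℝ) ^ (m : ℕ) / Real.Gamma m) with hC0
  set Cj : ℕ → ℝ := fun j => C0 * (K * (K + 1)) ^ j / ((Nat.factorial j : ℝ)) ^ 2 with hCj
  set F : ℕ → ℝ → ℝ := fun j x => Cj j * (x ^ j * Real.exp (-((K + 1) * x)) * W (β * x))
    with hF
  have hgcont : Continuous g := by fun_prop
  have hmR : (0:ℝ) < (m : ℝ) := by exact_mod_cast hm
  -- inner integral in terms of W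
  have hinner : ∀ x : ℝ, 0 < x →
      (∫ y in Set.Ioo 0 (β * x), fG (m : ℝ) y)
        = ((m : ℝ) ^ (m : ℕ) / Real.Gamma m) * W (β * x) := by
    intro x hx
    rw [hW]
    simp only
    rw [← MeasureTheory.integral_const_mul]
    refine setIntegral_congr_fun measurableSet_Ioo fun y hy => ?_
    rw [fG_eq m hm hy.1]
  -- pointwise expansion of the integrand
  have hpt : ∀ x ∈ Set.Ioi (0:ℝ),
      fR K x * ∫ y in Set.Ioo 0 (β * x), fG (m : ℝ) y = ∑' j, F j x := by
    intro x hx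
    have hx0 : (0:ℝ) < x := hx
    rw [hinner x hx0, fR, if_pos hx0]
    have h4 : 4 * K * (K + 1) * x = 4 * (K * (K + 1) * x) := by ring
    have hu : (0:ℝ) ≤ K * (K + 1) * x := by positivity
    rw [h4, besselI0_sqrt hu]
    rw [show ((K + 1) * Real.exp (-K - (K + 1) * x)
          * ∑' (k : ℕ), (K * (K + 1) * x) ^ k / (Nat.factorial k : ℝ) ^ 2)
        * ((m : ℝ) ^ (m : ℕ) / Real.Gamma m * W (β * x))
      = (∑' (k : ℕ), (K * (K + 1) * x) ^ k / (Nat.factorial k : ℝ) ^ 2)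
        * ((K + 1) * Real.exp (-K - (K + 1) * x)
          * ((m : ℝ) ^ (m : ℕ) / Real.Gamma m * W (β * x))) from by ring]
    rw [← tsum_mul_right]
    refine tsum_congr fun j => ?_
    rw [hF, hCj, hC0]
    simp only
    have hexp : Real.exp (-K - (K + 1) * x) = Real.exp (-K) * Real.exp (-((K + 1) * x)) := by
      rw [← Real.exp_add]; ring_nf
    rw [hexp, mul_pow, mul_pow]
    ring
  rw [O_NL, setIntegral_congr_fun measurableSet_Ioi hpt]
  -- measurability of W ∘ (β * ·) on Ioi 0
  have hprim : Continuous fun u : ℝ => ∫ t in (0:ℝ)..u, g t :=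
    intervalIntegral.continuous_primitive (fun a b => hgcont.intervalIntegrable a b) 0
  have hWeq : ∀ x ∈ Set.Ioi (0:ℝ), (∫ t in (0:ℝ)..(β * x), g t) = W (β * x) := by
    intro x hx
    have hbx : (0:ℝ) ≤ β * x := by
      have : (0:ℝ) < x := hx
      positivity
    rw [intervalIntegral.integral_of_le hbx, integral_Ioc_eq_integral_Ioo, hW]
  have hWm : AEStronglyMeasurable (fun x => W (β * x)) (volume.restrict (Set.Ioi 0)) := by
    have hcomp : Continuous fun x : ℝ => ∫ t in (0:ℝ)..(β * x), g t :=
      hprim.comp (continuous_const.mul continuous_id)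
    refine AEStronglyMeasurable.congr hcomp.aestronglyMeasurable ?_
    filter_upwards [ae_restrict_mem measurableSet_Ioi] with x hx
    exact hWeq x hx
  have hWb : ∀ u : ℝ, 0 ≤ W u ∧ W u ≤ (Nat.factorial p : ℝ) / (m : ℝ) ^ (p + 1) := fun u =>
    ⟨W_nonneg p (m : ℝ) u, W_le p hmR u⟩
  set Wmax : ℝ := (Nat.factorial p : ℝ) / (m : ℝ) ^ (p + 1) with hWmax
  have hWmax0 : 0 ≤ Wmax := by positivity
  -- integrability of each term
  have hdom : ∀ j : ℕ, Integrable
      (fun x => |Cj j| * Wmax * (x ^ j * Real.exp (-((K + 1) * x))))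
      (volume.restrict (Set.Ioi 0)) :=
    fun j => (integrableOn_pow_exp j hr).const_mul _
  have hFint : ∀ j : ℕ, Integrable (F j) (volume.restrict (Set.Ioi 0)) := by
    intro j
    refine (hdom j).mono' ?_ ?_
    · rw [hF]
      simp only
      exact ((((continuous_pow j).mul
        (by fun_prop : Continuous fun x : ℝ => Real.exp (-((K + 1) * x)))).aestronglyMeasurable.mul
          hWm).const_mul (Cj j))
    · filter_upwards [ae_restrict_mem measurableSet_Ioi] with x (hx : (0:ℝ) < x)
      rw [hF]
      simp only [Real.norm_eq_abs]
      rw [abs_mul, abs_mul]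
      have he : (0:ℝ) < Real.exp (-((K + 1) * x)) := Real.exp_pos _
      rw [abs_of_nonneg (by positivity : (0:ℝ) ≤ x ^ j * Real.exp (-((K + 1) * x))),
        abs_of_nonneg (hWb (β * x)).1]
      have := (hWb (β * x)).2
      have h1 : |Cj j| * (x ^ j * Real.exp (-((K + 1) * x)) * W (β * x))
          ≤ |Cj j| * (x ^ j * Real.exp (-((K + 1) * x)) * Wmax) := by
        refine mul_le_mul_of_nonneg_left ?_ (abs_nonneg _)
        refine mul_le_mul_of_nonneg_left this (by positivity)
      calc |Cj j| * (x ^ j * Real.exp (-((K + 1) * x)) * W (β * x))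
          ≤ |Cj j| * (x ^ j * Real.exp (-((K + 1) * x)) * Wmax) := h1
        _ = |Cj j| * Wmax * (x ^ j * Real.exp (-((K + 1) * x))) := by ring
  -- summability of the integrals of norms
  have hsum : Summable fun j => ∫ x in Set.Ioi (0:ℝ), ‖F j x‖ := by
    have hb : Summable fun j : ℕ =>
        |C0| * Wmax / (K + 1) * ((K * (K + 1) / (K + 1)) ^ j / (Nat.factorial j : ℝ)) := by
      exact (Real.summable_pow_div_factorial _).mul_left _
    refine Summable.of_nonneg_of_le (fun j => ?_) (fun j => ?_) hb
    · exact integral_nonneg fun x => norm_nonneg _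
    · have step1 : ∫ x in Set.Ioi (0:ℝ), ‖F j x‖
          ≤ ∫ x in Set.Ioi (0:ℝ), |Cj j| * Wmax * (x ^ j * Real.exp (-((K + 1) * x))) := by
        refine integral_mono_ae (hFint j).norm (hdom j) ?_
        filter_upwards [ae_restrict_mem measurableSet_Ioi] with x (hx : (0:ℝ) < x)
        rw [hF]
        simp only [Real.norm_eq_abs]
        rw [abs_mul, abs_mul]
        rw [abs_of_nonneg (by positivity : (0:ℝ) ≤ x ^ j * Real.exp (-((K + 1) * x))),
          abs_of_nonneg (hWb (β * x)).1]
        calc |Cj j| * (x ^ j * Real.exp (-((K + 1) * x)) * W (β * x))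
            ≤ |Cj j| * (x ^ j * Real.exp (-((K + 1) * x)) * Wmax) := by
              refine mul_le_mul_of_nonneg_left ?_ (abs_nonneg _)
              exact mul_le_mul_of_nonneg_left (hWb (β * x)).2 (by positivity)
          _ = |Cj j| * Wmax * (x ^ j * Real.exp (-((K + 1) * x))) := by ring
      have step2 : ∫ x in Set.Ioi (0:ℝ), |Cj j| * Wmax * (x ^ j * Real.exp (-((K + 1) * x)))
          = |Cj j| * Wmax * ((Nat.factorial j : ℝ) / (K + 1) ^ (j + 1)) := by
        rw [MeasureTheory.integral_const_mul, integral_pow_exp j hr]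
      have step3 : |Cj j| * Wmax * ((Nat.factorial j : ℝ) / (K + 1) ^ (j + 1))
          = |C0| * Wmax / (K + 1) * ((K * (K + 1) / (K + 1)) ^ j / (Nat.factorial j : ℝ)) := by
        rw [hCj]
        have hfj : (0:ℝ) < (Nat.factorial j : ℝ) := by positivity
        rw [abs_div, abs_mul, abs_of_nonneg (by positivity : (0:ℝ) ≤ (K * (K + 1)) ^ j),
          abs_of_nonneg (by positivity : (0:ℝ) ≤ ((Nat.factorial j : ℝ)) ^ 2), div_pow,
          pow_succ]
        field_simp
        ring
      linarith [step1, step2.le, step3.le, step2.ge, step3.ge]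
    -- done
  rw [← MeasureTheory.integral_tsum_of_summable_integral_norm hFint hsum]
  refine tsum_congr fun j => ?_
  rw [hF]
  simp only
  rw [MeasureTheory.integral_const_mul]
  have hDW : (∫ a in Set.Ioi (0:ℝ), a ^ j * Real.exp (-((K + 1) * a)) * W (β * a))
      = ∑ k ∈ Finset.range (j + 1),
          ((Nat.factorial j : ℝ) / (Nat.factorial k : ℝ)) * (Nat.factorial (p + k) : ℝ)
            * β ^ (p + 1)
            / ((K + 1) ^ (j - k + 1) * ((m : ℝ) * β + (K + 1)) ^ (p + k + 1)) := by
    simp only [hW]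
    exact D_value j p hr hmR hβ
  rw [hDW, hCj]

lemma D_le (j p : ℕ) {r c β : ℝ} (hr : 0 < r) (hc : 0 < c) (hβ : 0 < β) :
    ∑ k ∈ Finset.range (j + 1),
        ((Nat.factorial j : ℝ) / (Nat.factorial k : ℝ)) * (Nat.factorial (p + k) : ℝ)
          * β ^ (p + 1) / (r ^ (j - k + 1) * (c * β + r) ^ (p + k + 1))
      ≤ ((Nat.factorial p : ℝ) / c ^ (p + 1)) * ((Nat.factorial j : ℝ) / r ^ (j + 1)) := by
  rw [← D_value j p hr hc hβ]
  have hWmax : (0:ℝ) ≤ (Nat.factorial p : ℝ) / c ^ (p + 1) := by positivity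
  have hle : ∀ᵐ x ∂(volume.restrict (Set.Ioi (0:ℝ))),
      x ^ j * Real.exp (-(r * x)) * (∫ y in Set.Ioo 0 (β * x), y ^ p * Real.exp (-(c * y)))
        ≤ ((Nat.factorial p : ℝ) / c ^ (p + 1)) * (x ^ j * Real.exp (-(r * x))) := by
    filter_upwards [ae_restrict_mem measurableSet_Ioi] with x (hx : (0:ℝ) < x)
    have h1 := W_le p hc (β * x)
    have h2 : (0:ℝ) ≤ x ^ j * Real.exp (-(r * x)) := by positivity
    calc x ^ j * Real.exp (-(r * x)) * (∫ y in Set.Ioo 0 (β * x), y ^ p * Real.exp (-(c * y)))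
        ≤ x ^ j * Real.exp (-(r * x)) * ((Nat.factorial p : ℝ) / c ^ (p + 1)) :=
          mul_le_mul_of_nonneg_left h1 h2
      _ = ((Nat.factorial p : ℝ) / c ^ (p + 1)) * (x ^ j * Real.exp (-(r * x))) := by ring
  have hnn : 0 ≤ᵐ[volume.restrict (Set.Ioi (0:ℝ))] fun x =>
      x ^ j * Real.exp (-(r * x)) * ∫ y in Set.Ioo 0 (β * x), y ^ p * Real.exp (-(c * y)) := by
    filter_upwards [ae_restrict_mem measurableSet_Ioi] with x (hx : (0:ℝ) < x)
    exact mul_nonneg (by positivity) (W_nonneg p c (β * x))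
  calc ∫ x in Set.Ioi (0:ℝ), x ^ j * Real.exp (-(r * x))
          * ∫ y in Set.Ioo 0 (β * x), y ^ p * Real.exp (-(c * y))
      ≤ ∫ x in Set.Ioi (0:ℝ), ((Nat.factorial p : ℝ) / c ^ (p + 1))
          * (x ^ j * Real.exp (-(r * x))) :=
        integral_mono_of_nonneg hnn ((integrableOn_pow_exp j hr).const_mul _) hle
    _ = ((Nat.factorial p : ℝ) / c ^ (p + 1)) * ((Nat.factorial j : ℝ) / r ^ (j + 1)) := by
        rw [MeasureTheory.integral_const_mul, integral_pow_exp j hr]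

/-- Theorem 1, closed form of `H_L(α, γ) = ∫₀^γ O_{N,L}(α t) dt` (LoS interference case). -/
theorem H_L_closed_form
    (m : ℕ) (hm : 0 < m) (K α γ : ℝ) (hK : 0 ≤ K) (hα : 0 < α) (hγ : 0 < γ)
    (hlt : (m : ℝ) * α * γ < K + 1) :
    (∫ t in (0 : ℝ)..γ, O_NL m K (α * t)) =
      (Real.exp (-K) * ((m : ℝ) * α) ^ (m : ℕ) * γ ^ (m + 1) /
          (Real.Gamma m * (K + 1) ^ (m : ℕ) * ((m : ℝ) + 1))) *
        ∑' j : ℕ, (K ^ j / (Nat.factorial j : ℝ)) *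
          ∑ k ∈ Finset.range (j + 1),
            (Real.Gamma ((k : ℝ) + m) / (Nat.factorial k : ℝ)) *
              hyp2F1 ((m : ℝ) + 1) ((m : ℝ) + k) ((m : ℝ) + 2)
                (-((m : ℝ) * α * γ) / (K + 1)) := by
  have hr : (0:ℝ) < K + 1 := by linarith
  have hmR : (0:ℝ) < (m : ℝ) := by exact_mod_cast hm
  have hΓ : 0 < Real.Gamma m := Real.Gamma_pos_of_pos hmR
  have hcc : (0:ℝ) < (m : ℝ) * α / (K + 1) := by positivity
  have hccγ : ((m : ℝ) * α / (K + 1)) * γ < 1 := by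
    rw [div_mul_eq_mul_div, div_lt_one hr]
    exact hlt
  set G : ℕ → ℝ → ℝ := fun j t =>
    ((K + 1) * Real.exp (-K) * ((m : ℝ) ^ (m : ℕ) / Real.Gamma m)
        * (K * (K + 1)) ^ j / ((Nat.factorial j : ℝ)) ^ 2)
      * ∑ k ∈ Finset.range (j + 1),
          ((Nat.factorial j : ℝ) / (Nat.factorial k : ℝ)) * (Nat.factorial (m - 1 + k) : ℝ)
            * (α * t) ^ ((m - 1) + 1)
            / ((K + 1) ^ (j - k + 1) * ((m : ℝ) * (α * t) + (K + 1)) ^ ((m - 1) + k + 1))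
    with hG
  have hOt : ∀ t ∈ Set.Ioc (0:ℝ) γ, O_NL m K (α * t) = ∑' j, G j t := by
    intro t ht
    rw [O_NL_eq m hm hK (mul_pos hα ht.1)]
  rw [intervalIntegral.integral_of_le hγ.le,
    setIntegral_congr_fun measurableSet_Ioc hOt]
  -- integrability of each inner summand on Ioc
  have hjk_int : ∀ j k : ℕ, IntegrableOn (fun t : ℝ =>
      ((Nat.factorial j : ℝ) / (Nat.factorial k : ℝ)) * (Nat.factorial (m - 1 + k) : ℝ)
        * (α * t) ^ ((m - 1) + 1)
        / ((K + 1) ^ (j - k + 1) * ((m : ℝ) * (α * t) + (K + 1)) ^ ((m - 1) + k + 1)))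
      (Set.Ioc (0:ℝ) γ) := by
    intro j k
    have hcont : ContinuousOn (fun t : ℝ =>
        ((Nat.factorial j : ℝ) / (Nat.factorial k : ℝ)) * (Nat.factorial (m - 1 + k) : ℝ)
          * (α * t) ^ ((m - 1) + 1)
          / ((K + 1) ^ (j - k + 1) * ((m : ℝ) * (α * t) + (K + 1)) ^ ((m - 1) + k + 1)))
        (Set.Icc 0 γ) := by
      apply ContinuousOn.div
      · fun_prop
      · fun_prop
      · intro t ht
        have ht0 : (0:ℝ) ≤ t := ht.1
        have h1 : (0:ℝ) < (m : ℝ) * (α * t) + (K + 1) := by positivity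
        positivity
    exact (hcont.integrableOn_Icc).mono_set Set.Ioc_subset_Icc_self
  have hGint : ∀ j : ℕ, Integrable (G j) (volume.restrict (Set.Ioc 0 γ)) := by
    intro j
    rw [hG]
    exact (integrable_finset_sum _ fun k _ => hjk_int j k).const_mul _
  -- nonnegativity and bound of G j t on Ioc
  set Cj : ℕ → ℝ := fun j => (K + 1) * Real.exp (-K) * ((m : ℝ) ^ (m : ℕ) / Real.Gamma m)
      * (K * (K + 1)) ^ j / ((Nat.factorial j : ℝ)) ^ 2 with hCj
  have hCjnn : ∀ j, 0 ≤ Cj j := by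
    intro j
    rw [hCj]
    positivity
  set Wmax : ℝ := (Nat.factorial (m - 1) : ℝ) / (m : ℝ) ^ ((m - 1) + 1) with hWmax
  have hWmaxnn : 0 ≤ Wmax := by rw [hWmax]; positivity
  have hGb : ∀ j : ℕ, ∀ t ∈ Set.Ioc (0:ℝ) γ,
      ‖G j t‖ ≤ Cj j * (Wmax * ((Nat.factorial j : ℝ) / (K + 1) ^ (j + 1))) := by
    intro j t ht
    have hβ : 0 < α * t := mul_pos hα ht.1
    have hsum_nn : 0 ≤ ∑ k ∈ Finset.range (j + 1),
        ((Nat.factorial j : ℝ) / (Nat.factorial k : ℝ)) * (Nat.factorial (m - 1 + k) : ℝ)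
          * (α * t) ^ ((m - 1) + 1)
          / ((K + 1) ^ (j - k + 1) * ((m : ℝ) * (α * t) + (K + 1)) ^ ((m - 1) + k + 1)) := by
      refine Finset.sum_nonneg fun k _ => ?_
      have h1 : (0:ℝ) < (m : ℝ) * (α * t) + (K + 1) := by positivity
      positivity
    have hle := D_le j (m - 1) hr hmR hβ
    rw [hG]
    simp only [Real.norm_eq_abs]
    rw [abs_mul, abs_of_nonneg (hCjnn j), abs_of_nonneg hsum_nn]
    exact mul_le_mul_of_nonneg_left hle (hCjnn j)
  have hGsum : Summable fun j => ∫ t in Set.Ioc (0:ℝ) γ, ‖G j t‖ := by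
    set M : ℕ → ℝ := fun j => γ * (Cj j * (Wmax * ((Nat.factorial j : ℝ) / (K + 1) ^ (j + 1))))
      with hM
    have hMsum : Summable M := by
      have hbase : Summable fun j : ℕ =>
          (γ * ((K + 1) * Real.exp (-K) * ((m : ℝ) ^ (m : ℕ) / Real.Gamma m)) * Wmax / (K + 1))
            * ((K * (K + 1) / (K + 1)) ^ j / (Nat.factorial j : ℝ)) :=
        (Real.summable_pow_div_factorial _).mul_left _
      refine hbase.congr fun j => ?_
      simp only [hM, hCj]
      have hfj : (0:ℝ) < (Nat.factorial j : ℝ) := by positivity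
      rw [div_pow]
      field_simp
      ring
    refine Summable.of_nonneg_of_le (fun j => integral_nonneg fun t => norm_nonneg _)
      (fun j => ?_) hMsum
    have hconst_int : Integrable (fun _ : ℝ =>
        Cj j * (Wmax * ((Nat.factorial j : ℝ) / (K + 1) ^ (j + 1))))
        (volume.restrict (Set.Ioc 0 γ)) := by
      refine integrableOn_const ?_
      rw [Real.volume_Ioc]
      exact ENNReal.ofReal_ne_top
    have step1 : ∫ t in Set.Ioc (0:ℝ) γ, ‖G j t‖
        ≤ ∫ _ in Set.Ioc (0:ℝ) γ,
            Cj j * (Wmax * ((Nat.factorial j : ℝ) / (K + 1) ^ (j + 1))) := by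
      refine integral_mono_of_nonneg (Filter.Eventually.of_forall fun t => norm_nonneg _)
        hconst_int ?_
      filter_upwards [ae_restrict_mem measurableSet_Ioc] with t ht
      exact hGb j t ht
    have step2 : (∫ _ in Set.Ioc (0:ℝ) γ,
        Cj j * (Wmax * ((Nat.factorial j : ℝ) / (K + 1) ^ (j + 1))))
        = γ * (Cj j * (Wmax * ((Nat.factorial j : ℝ) / (K + 1) ^ (j + 1)))) := by
      rw [setIntegral_const, Real.volume_real_Ioc_of_le hγ.le, smul_eq_mul,
        sub_zero]
    rw [hM]
    calc ∫ t in Set.Ioc (0:ℝ) γ, ‖G j t‖ ≤ _ := step1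
      _ = _ := step2
  rw [← MeasureTheory.integral_tsum_of_summable_integral_norm hGint hGsum]
  rw [← tsum_mul_left]
  refine tsum_congr fun j => ?_
  rw [hG]
  simp only
  rw [MeasureTheory.integral_const_mul]
  rw [integral_finset_sum _ fun k _ => hjk_int j k]
  -- per-k reduction to the Euler integral
  have hterm : ∀ k ∈ Finset.range (j + 1),
      (∫ t in Set.Ioc (0:ℝ) γ,
        ((Nat.factorial j : ℝ) / (Nat.factorial k : ℝ)) * (Nat.factorial (m - 1 + k) : ℝ)
          * (α * t) ^ ((m - 1) + 1)
          / ((K + 1) ^ (j - k + 1) * ((m : ℝ) * (α * t) + (K + 1)) ^ ((m - 1) + k + 1)))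
      = (((Nat.factorial j : ℝ) / (Nat.factorial k : ℝ)) * (Nat.factorial (m - 1 + k) : ℝ)
            * α ^ m / ((K + 1) ^ (j - k + 1) * (K + 1) ^ (m + k)))
        * (γ ^ (m + 1) / ((m : ℝ) + 1)
            * hyp2F1 ((m : ℝ) + 1) ((m : ℝ) + k) ((m : ℝ) + 2)
              (-((m : ℝ) * α * γ) / (K + 1))) := by
    intro k hk
    have hexp1 : (m - 1) + 1 = m := by omega
    have hexp2 : (m - 1) + k + 1 = m + k := by omega
    have hsc : ∀ t ∈ Set.Ioc (0:ℝ) γ,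
        ((Nat.factorial j : ℝ) / (Nat.factorial k : ℝ)) * (Nat.factorial (m - 1 + k) : ℝ)
          * (α * t) ^ ((m - 1) + 1)
          / ((K + 1) ^ (j - k + 1) * ((m : ℝ) * (α * t) + (K + 1)) ^ ((m - 1) + k + 1))
        = (((Nat.factorial j : ℝ) / (Nat.factorial k : ℝ)) * (Nat.factorial (m - 1 + k) : ℝ)
              * α ^ m / ((K + 1) ^ (j - k + 1) * (K + 1) ^ (m + k)))
          * (t ^ m * ((1 + ((m : ℝ) * α / (K + 1)) * t)⁻¹) ^ (m + k)) := by
      intro t ht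
      have ht0 : (0:ℝ) < t := ht.1
      have hX : (0:ℝ) < 1 + ((m : ℝ) * α / (K + 1)) * t := by positivity
      have hden : (m : ℝ) * (α * t) + (K + 1)
          = (K + 1) * (1 + ((m : ℝ) * α / (K + 1)) * t) := by
        field_simp
        ring
      rw [hexp1, hexp2, hden, mul_pow, mul_pow, inv_pow]
      rw [div_eq_iff (by positivity)]
      have hXne : (1 + ((m : ℝ) * α / (K + 1)) * t) ^ (m + k) ≠ 0 := by positivity
      field_simp

    rw [setIntegral_congr_fun measurableSet_Ioc hsc, MeasureTheory.integral_const_mul,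
      euler_2F1 m (m + k) hcc hγ hccγ]
    have harg : ((m + k : ℕ) : ℝ) = (m : ℝ) + k := by push_cast; ring
    have hzeq : -(((m : ℝ) * α / (K + 1)) * γ) = -((m : ℝ) * α * γ) / (K + 1) := by ring
    rw [harg, hzeq]
  rw [Finset.sum_congr rfl hterm]
  -- final algebra
  rw [Finset.mul_sum, Finset.mul_sum, Finset.mul_sum]
  refine Finset.sum_congr rfl fun k hk => ?_
  have hkj : k ≤ j := Nat.lt_succ_iff.mp (Finset.mem_range.mp hk)
  have hΓk : Real.Gamma ((k : ℝ) + m) = (Nat.factorial (m - 1 + k) : ℝ) := by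
    have h1 : (k : ℝ) + m = ((m - 1 + k : ℕ) : ℝ) + 1 := by
      have hm1 : (1:ℕ) ≤ m := hm
      push_cast [hm1]
      ring
    rw [h1, Real.Gamma_nat_eq_factorial]
  rw [hΓk]
  have hpow : (K + 1) ^ (j - k + 1) * (K + 1) ^ (m + k) = (K + 1) ^ (j + m + 1) := by
    rw [← pow_add]
    congr 1
    omega
  have hKK : (K * (K + 1)) ^ j = K ^ j * (K + 1) ^ j := mul_pow K (K + 1) j
  have hmα : ((m : ℝ) * α) ^ (m : ℕ) = (m : ℝ) ^ (m : ℕ) * α ^ m := mul_pow _ _ m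
  rw [hpow, hKK, hmα]
  have hfj : (0:ℝ) < (Nat.factorial j : ℝ) := by positivity
  have hfk : (0:ℝ) < (Nat.factorial k : ℝ) := by positivity
  have hm1 : (0:ℝ) < (m : ℝ) + 1 := by positivity
  have hK1j : (0:ℝ) < (K + 1) ^ (j + m + 1) := by positivity
  have hK1m : (0:ℝ) < (K + 1) ^ (m : ℕ) := by positivity
  have hsplit : (K + 1) ^ (j + m + 1) = (K + 1) ^ j * (K + 1) ^ (m : ℕ) * (K + 1) := by
    rw [← pow_add, ← pow_succ]
  rw [hsplit]
  field_simp
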